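/- Let z denote the minimum over integers r ≥ 2 of the chromatic number of the generalized Kneser graph K(2r, r, 2). For any instance with two groups of agents containing at most z − 1 agents in total, where all agents have monotonic, normalized valuations over an arbitrary finite set G of goods, there exists an allocation (B₁, B₂) of G to the two groups with ||B₁| − |B₂|| ≤ 1 that is EF1 for every agent. -/

import Mathlib

open Finset

variable {γ : Type*} [DecidableEq γ]

/-- An allocation is EF1 for an agent with valuation `u` whose group receives `mine`,
the other group receiving `other`. -/
def EF1 (u : Finset γ → ℝ) (mine other : Finset γ) : Prop :=
  ∃ B ⊆ other, B.card ≤ 1 ∧ u (other \ B) ≤ u mine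

/-- A valuation is monotonic if larger sets are weakly more valuable. -/
def Monotonic (u : Finset γ → ℝ) : Prop :=
  ∀ ⦃S T : Finset γ⦄, S ⊆ T → u S ≤ u T

/-- A valuation is normalized if the empty set has value zero. -/
def Normalized (u : Finset γ → ℝ) : Prop :=
  u ∅ = 0

/-- The generalized Kneser graph `K(b, r, s)`: vertices are the `r`-element subsets of a
`b`-element set, and two distinct vertices are adjacent iff the corresponding subsets
intersect in at most `s - 1` elements. -/
def kneserGraph (b r s : ℕ) : SimpleGraph {A : Finset (Fin b) // A.card = r} where
  Adj A B := A ≠ B ∧ ((A : Finset (Fin b)) ∩ (B : Finset (Fin b))).card ≤ s - 1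
  symm := by
    constructor
    rintro A B ⟨h1, h2⟩
    exact ⟨h1.symm, by rwa [Finset.inter_comm]⟩
  loopless := by
    constructor
    rintro A ⟨h1, -⟩
    exact h1 rfl

/-- Let z be the minimum over r ≥ 2 of the chromatic number of K(2r, r, 2). For two groups
with at most z - 1 agents in total, monotonic normalized valuations, and any finite set of
goods, a balanced EF1 allocation always exists. -/
theorem monotonic_EF1_of_min_chromatic (z : ℕ)
    (hz : (z : ℕ∞) = ⨅ (r : ℕ) (_ : 2 ≤ r), (kneserGraph (2 * r) r 2).chromaticNumber)
    (γ : Type*) [Fintype γ] [DecidableEq γ]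
    (n₁ n₂ : ℕ) (hn : n₁ + n₂ ≤ z - 1)
    (u : Fin n₁ → Finset γ → ℝ) (v : Fin n₂ → Finset γ → ℝ)
    (humono : ∀ j, Monotonic (u j)) (hunorm : ∀ j, Normalized (u j))
    (hvmono : ∀ j, Monotonic (v j)) (hvnorm : ∀ j, Normalized (v j)) :
    ∃ B₁ B₂ : Finset γ, Disjoint B₁ B₂ ∧ B₁ ∪ B₂ = Finset.univ ∧
      |(B₁.card : ℤ) - (B₂.card : ℤ)| ≤ 1 ∧
      (∀ j, EF1 (u j) B₁ B₂) ∧ (∀ j, EF1 (v j) B₂ B₁) := by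
  classical
  set m := Fintype.card γ with hm
  by_cases hsmall : m ≤ 2
  · -- At most two goods: any balanced split works since whole bundles can be removed.
    obtain ⟨B₁, hB₁sub, hB₁card⟩ :=
      Finset.exists_subset_card_eq (s := (Finset.univ : Finset γ)) (n := m / 2)
        (by rw [Finset.card_univ]; omega)
    have hB₂card : (Finset.univ \ B₁).card = m - m / 2 := by
      rw [Finset.card_sdiff_of_subset hB₁sub, Finset.card_univ, hB₁card]
    refine ⟨B₁, Finset.univ \ B₁, Finset.disjoint_sdiff,
      Finset.union_sdiff_of_subset hB₁sub, ?_, ?_, ?_⟩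
    · rw [abs_le, hB₁card, hB₂card]; constructor <;> push_cast <;> omega
    · intro j
      refine ⟨Finset.univ \ B₁, le_refl _, by rw [hB₂card]; omega, ?_⟩
      rw [Finset.sdiff_self]
      calc (u j) ∅ = 0 := hunorm j
        _ ≤ (u j) B₁ := by rw [← hunorm j]; exact humono j (Finset.empty_subset _)
    · intro j
      refine ⟨B₁, le_refl _, by rw [hB₁card]; omega, ?_⟩
      rw [Finset.sdiff_self]
      calc (v j) ∅ = 0 := hvnorm j
        _ ≤ (v j) (Finset.univ \ B₁) := by
          rw [← hvnorm j]; exact hvmono j (Finset.empty_subset _)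
  · -- Main case: at least three goods.
    push_neg at hsmall
    set r := (m + 1) / 2 with hrdef
    have hr2 : 2 ≤ r := by omega
    have hmr : m ≤ 2 * r ∧ 2 * r ≤ m + 1 := by omega
    have hpos : 0 < 2 * r := by omega
    obtain ⟨f⟩ : Nonempty (γ ↪ Fin (2 * r)) :=
      Function.Embedding.nonempty_of_card_le (by simpa using hmr.1)
    set φ : Finset (Fin (2 * r)) → Finset γ :=
      fun S => Finset.univ.filter (fun g => f g ∈ S) with hφdef
    have hφmono : ∀ {S T : Finset (Fin (2 * r))}, S ⊆ T → φ S ⊆ φ T := by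
      intro S T hST g hg
      simp only [hφdef, Finset.mem_filter] at hg ⊢
      exact ⟨hg.1, hST hg.2⟩
    have hφcompl : ∀ S : Finset (Fin (2 * r)), φ Sᶜ = (φ S)ᶜ := by
      intro S; ext g; simp [hφdef]
    have hφcard_le : ∀ S : Finset (Fin (2 * r)), (φ S).card ≤ S.card := by
      intro S
      refine Finset.card_le_card_of_injOn f ?_ f.injective.injOn
      intro g hg; simp only [Finset.mem_coe, hφdef, Finset.mem_filter] at hg; exact hg.2
    have hφsingle : ∀ x : Fin (2 * r), (φ {x}).card ≤ 1 := by
      intro x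
      refine Finset.card_le_one.2 ?_
      intro a ha b hb
      simp only [hφdef, Finset.mem_filter, Finset.mem_singleton] at ha hb
      exact f.injective (ha.2.trans hb.2.symm)
    -- cardinality of image bundles
    have hφsum : ∀ S : Finset (Fin (2 * r)), (φ S).card + (φ Sᶜ).card = m := by
      intro S; rw [hφcompl, hm]; exact Finset.card_add_card_compl _
    have hbal : ∀ S : Finset (Fin (2 * r)), S.card = r →
        |((φ S).card : ℤ) - ((φ Sᶜ).card : ℤ)| ≤ 1 := by
      intro S hS
      have h1 := hφsum S
      have h2 := hφcard_le S
      have h3 := hφcard_le Sᶜ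
      rw [Finset.card_compl, Fintype.card_fin, hS] at h3
      rw [hS] at h2
      rw [abs_le]; constructor <;> push_cast <;> omega
    -- Failure of EF1 gives strict inequalities for all one-good removals.
    have hfail : ∀ (w : Finset γ → ℝ) (S T : Finset (Fin (2 * r))),
        ¬ EF1 w (φ S) (φ T) → ∀ x : Fin (2 * r), w (φ S) < w (φ (T \ {x})) := by
      intro w S T hne x
      by_contra hle
      push_neg at hle
      refine hne ⟨φ T ∩ φ {x}, Finset.inter_subset_left,
        le_trans (Finset.card_le_card Finset.inter_subset_right) (hφsingle x), ?_⟩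
      have heq : φ T \ (φ T ∩ φ {x}) = φ (T \ {x}) := by
        ext g
        simp only [hφdef, Finset.mem_filter, Finset.mem_sdiff, Finset.mem_inter,
          Finset.mem_singleton, Finset.mem_univ, true_and]
        tauto
      rw [heq]; exact hle
    -- Two adjacent failures for the same agent are contradictory.
    have hchain : ∀ (w : Finset γ → ℝ), Monotonic w →
        ∀ (S T : Finset (Fin (2 * r))), (Sᶜ ∩ Tᶜ).card ≤ 1 →
        (∀ x : Fin (2 * r), w (φ S) < w (φ (Sᶜ \ {x}))) →
        (∀ x : Fin (2 * r), w (φ T) < w (φ (Tᶜ \ {x}))) → False := by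
      intro w hw S T hcard hS hT
      have : Nonempty (Fin (2 * r)) := ⟨⟨0, hpos⟩⟩
      obtain ⟨x, hx⟩ := Finset.card_le_one_iff_subset_singleton.1 hcard
      have hST : Sᶜ \ {x} ⊆ T := by
        intro g hg
        simp only [Finset.mem_sdiff, Finset.mem_compl, Finset.mem_singleton] at hg
        by_contra hgT
        have : g ∈ Sᶜ ∩ Tᶜ := by
          simp only [Finset.mem_inter, Finset.mem_compl]
          exact ⟨hg.1, hgT⟩
        exact hg.2 (Finset.mem_singleton.1 (hx this))
      have hTS : Tᶜ \ {x} ⊆ S := by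
        intro g hg
        simp only [Finset.mem_sdiff, Finset.mem_compl, Finset.mem_singleton] at hg
        by_contra hgS
        have : g ∈ Sᶜ ∩ Tᶜ := by
          simp only [Finset.mem_inter, Finset.mem_compl]
          exact ⟨hgS, hg.1⟩
        exact hg.2 (Finset.mem_singleton.1 (hx this))
      have c1 : w (φ S) < w (φ (Sᶜ \ {x})) := hS x
      have c2 : w (φ (Sᶜ \ {x})) ≤ w (φ T) := hw (hφmono hST)
      have c3 : w (φ T) < w (φ (Tᶜ \ {x})) := hT x
      have c4 : w (φ (Tᶜ \ {x})) ≤ w (φ S) := hw (hφmono hTS)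
      linarith
    by_contra hcon
    -- every balanced split induced by a vertex has a failing agent
    have key : ∀ A : {A : Finset (Fin (2 * r)) // A.card = r},
        (∃ j, ¬ EF1 (u j) (φ A.1) (φ A.1ᶜ)) ∨ (∃ j, ¬ EF1 (v j) (φ A.1ᶜ) (φ A.1)) := by
      intro A
      by_contra hno
      push_neg at hno
      refine hcon ⟨φ A.1, φ A.1ᶜ, ?_, ?_, hbal A.1 A.2, hno.1, hno.2⟩
      · rw [hφcompl]; exact disjoint_compl_right
      · rw [hφcompl]; exact Finset.union_compl _
    have key' : ∀ A : {A : Finset (Fin (2 * r)) // A.card = r},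
        ∃ j : Fin n₁ ⊕ Fin n₂,
          Sum.elim (fun j => ¬ EF1 (u j) (φ A.1) (φ A.1ᶜ))
            (fun j => ¬ EF1 (v j) (φ A.1ᶜ) (φ A.1)) j := by
      intro A
      rcases key A with ⟨j, hj⟩ | ⟨j, hj⟩
      · exact ⟨Sum.inl j, hj⟩
      · exact ⟨Sum.inr j, hj⟩
    choose color hcolor using key'
    -- intersections of adjacent vertices
    have hinter : ∀ A B : {A : Finset (Fin (2 * r)) // A.card = r},
        (A.1 ∩ B.1).card ≤ 1 → (A.1ᶜ ∩ B.1ᶜ).card ≤ 1 := by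
      intro A B hAB
      have h1 : A.1ᶜ ∩ B.1ᶜ = (A.1 ∪ B.1)ᶜ := (Finset.compl_union _ _).symm
      have h2 : (A.1 ∪ B.1).card + (A.1 ∩ B.1).card = A.1.card + B.1.card :=
        Finset.card_union_add_card_inter _ _
      have h3 : ((A.1 ∪ B.1)ᶜ).card = Fintype.card (Fin (2 * r)) - (A.1 ∪ B.1).card :=
        Finset.card_compl _
      rw [h1, h3, Fintype.card_fin]
      have := A.2; have := B.2
      omega
    -- the coloring is proper
    have hproper : ∀ A B : {A : Finset (Fin (2 * r)) // A.card = r},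
        (kneserGraph (2 * r) r 2).Adj A B → color A ≠ color B := by
      intro A B hadj hEq
      obtain ⟨-, hAB⟩ := hadj
      have hAB' : (A.1 ∩ B.1).card ≤ 1 := hAB
      have hA := hcolor A
      have hB := hcolor B
      rw [hEq] at hA
      rcases hj : color B with j | j
      · rw [hj] at hA hB
        simp only [Sum.elim_inl] at hA hB
        exact hchain (u j) (humono j) A.1 B.1 (hinter A B hAB')
          (hfail (u j) A.1 A.1ᶜ hA) (hfail (u j) B.1 B.1ᶜ hB)
      · rw [hj] at hA hB
        simp only [Sum.elim_inr] at hA hB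
        have hA' := hfail (v j) A.1ᶜ A.1 hA
        have hB' := hfail (v j) B.1ᶜ B.1 hB
        refine hchain (v j) (hvmono j) A.1ᶜ B.1ᶜ ?_ ?_ ?_
        · rw [compl_compl, compl_compl]; exact hAB'
        · intro x; rw [compl_compl]; exact hA' x
        · intro x; rw [compl_compl]; exact hB' x
    let C : (kneserGraph (2 * r) r 2).Coloring (Fin n₁ ⊕ Fin n₂) :=
      SimpleGraph.Coloring.mk color (fun hadj => hproper _ _ hadj)
    have hchrom : (kneserGraph (2 * r) r 2).chromaticNumber ≤ (n₁ + n₂ : ℕ) := by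
      have := C.colorable.chromaticNumber_le
      simpa using this
    have hzle : (z : ℕ∞) ≤ (kneserGraph (2 * r) r 2).chromaticNumber := by
      rw [hz]
      exact iInf₂_le r hr2
    have hzn : z ≤ n₁ + n₂ := by
      have := le_trans hzle hchrom
      exact_mod_cast this
    -- there is at least one agent: take any vertex and its failing agent
    obtain ⟨S₀, -, hS₀⟩ := Finset.exists_subset_card_eq (s := (Finset.univ : Finset (Fin (2 * r)))) (n := r)
        (by rw [Finset.card_univ, Fintype.card_fin]; omega)
    have hagents : 1 ≤ n₁ + n₂ := by
      rcases key ⟨S₀, hS₀⟩ with ⟨j, -⟩ | ⟨j, -⟩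
      · have := j.2; omega
      · have := j.2; omega
    omega
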